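/- Let F = {v ∈ ℤ⁸ : ⟨v,v⟩ = 0 and ⟨v,h⟩ = 2}. Then F is a finite set of cardinality exactly 126. -/

import Mathlib

/-- The lattice ℤ⁸. -/
abbrev V : Type := Fin 8 → ℤ

/-- The bilinear form with Gram matrix diag(1,−1,…,−1). -/
def B (v w : V) : ℤ := v 0 * w 0 - ∑ i : Fin 7, v i.succ * w i.succ

/-- The class h = (3,−1,…,−1) with ⟨h,h⟩ = 2. -/
def hh : V := ![3, -1, -1, -1, -1, -1, -1, -1]

/-- The involution ι(v) = ⟨v,h⟩·h − v. -/
def iota (v : V) : V := B v hh • hh - v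

/-- L = {v : ⟨v,v⟩ = −1, ⟨v,h⟩ = 1}. -/
def L : Set V := {v | B v v = -1 ∧ B v hh = 1}

/-- F = {v : ⟨v,v⟩ = 0, ⟨v,h⟩ = 2}. -/
def F : Set V := {v | B v v = 0 ∧ B v hh = 2}

/-- L̄ = L/⟨ι⟩, realized as the set of ι-orbits. -/
def Lbar : Set (Set V) := {p | ∃ v ∈ L, p = {v, iota v}}

/-- F̄ = F/⟨ι⟩, realized as the set of ι-orbits. -/
def Fbar : Set (Set V) := {p | ∃ v ∈ F, p = {v, iota v}}

/-- G = {g ∈ GL₈(ℤ) : g preserves B and g(h) = h}. -/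
def G : Subgroup (V ≃ₗ[ℤ] V) where
  carrier := {g | (∀ v w : V, B (g v) (g w) = B v w) ∧ g hh = hh}
  one_mem' := ⟨fun _ _ => rfl, rfl⟩
  mul_mem' := by
    rintro a b ⟨ha1, ha2⟩ ⟨hb1, hb2⟩
    refine ⟨fun v w => ?_, ?_⟩
    · show B (a (b v)) (a (b w)) = B v w
      rw [ha1, hb1]
    · show a (b hh) = hh
      rw [hb2, ha2]
  inv_mem' := by
    rintro a ⟨ha1, ha2⟩
    refine ⟨fun v w => ?_, ?_⟩
    · show B (a.symm v) (a.symm w) = B v w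
      conv_rhs => rw [← a.apply_symm_apply v, ← a.apply_symm_apply w]
      rw [ha1]
    · show a.symm hh = hh
      conv_lhs => rw [← ha2]
      exact a.symm_apply_apply hh


section Aux

lemma Bvv' (v : V) : B v v = v 0 * v 0 - (v 1 * v 1 + v 2 * v 2 + v 3 * v 3 + v 4 * v 4 + v 5 * v 5 + v 6 * v 6 + v 7 * v 7) := by
  simp only [B, Fin.sum_univ_seven,
    show (Fin.succ 0 : Fin 8) = 1 from rfl, show (Fin.succ 1 : Fin 8) = 2 from rfl,
    show (Fin.succ 2 : Fin 8) = 3 from rfl, show (Fin.succ 3 : Fin 8) = 4 from rfl,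
    show (Fin.succ 4 : Fin 8) = 5 from rfl, show (Fin.succ 5 : Fin 8) = 6 from rfl,
    show (Fin.succ 6 : Fin 8) = 7 from rfl]

lemma Bvh' (v : V) : B v hh = 3 * v 0 + (v 1 + v 2 + v 3 + v 4 + v 5 + v 6 + v 7) := by
  simp only [B, hh, Fin.sum_univ_seven,
    show (Fin.succ 0 : Fin 8) = 1 from rfl, show (Fin.succ 1 : Fin 8) = 2 from rfl,
    show (Fin.succ 2 : Fin 8) = 3 from rfl, show (Fin.succ 3 : Fin 8) = 4 from rfl,
    show (Fin.succ 4 : Fin 8) = 5 from rfl, show (Fin.succ 5 : Fin 8) = 6 from rfl,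
    show (Fin.succ 6 : Fin 8) = 7 from rfl,
    show (![3, -1, -1, -1, -1, -1, -1, -1] : V) 0 = 3 from rfl,
    show (![3, -1, -1, -1, -1, -1, -1, -1] : V) 1 = -1 from rfl,
    show (![3, -1, -1, -1, -1, -1, -1, -1] : V) 2 = -1 from rfl,
    show (![3, -1, -1, -1, -1, -1, -1, -1] : V) 3 = -1 from rfl,
    show (![3, -1, -1, -1, -1, -1, -1, -1] : V) 4 = -1 from rfl,
    show (![3, -1, -1, -1, -1, -1, -1, -1] : V) 5 = -1 from rfl,
    show (![3, -1, -1, -1, -1, -1, -1, -1] : V) 6 = -1 from rfl,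
    show (![3, -1, -1, -1, -1, -1, -1, -1] : V) 7 = -1 from rfl]
  ring

lemma aBound' (a c1 c2 c3 c4 c5 c6 c7 : ℤ)
    (h1 : a*a = c1*c1+c2*c2+c3*c3+c4*c4+c5*c5+c6*c6+c7*c7)
    (h2 : 3*a + (c1+c2+c3+c4+c5+c6+c7) = 2) : 1 ≤ a ∧ a ≤ 5 := by
  have e : (c1+c2+c3+c4+c5+c6+c7)*(c1+c2+c3+c4+c5+c6+c7) = (2-3*a)*(2-3*a) := by
    have : c1+c2+c3+c4+c5+c6+c7 = 2-3*a := by linarith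
    rw [this]
  have q : a*a - 6*a + 2 ≤ 0 := by
    linarith [e, h1, sq_nonneg (c1-c2), sq_nonneg (c1-c3), sq_nonneg (c1-c4), sq_nonneg (c1-c5), sq_nonneg (c1-c6), sq_nonneg (c1-c7),
      sq_nonneg (c2-c3), sq_nonneg (c2-c4), sq_nonneg (c2-c5), sq_nonneg (c2-c6), sq_nonneg (c2-c7),
      sq_nonneg (c3-c4), sq_nonneg (c3-c5), sq_nonneg (c3-c6), sq_nonneg (c3-c7),
      sq_nonneg (c4-c5), sq_nonneg (c4-c6), sq_nonneg (c4-c7),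
      sq_nonneg (c5-c6), sq_nonneg (c5-c7), sq_nonneg (c6-c7)]
  constructor
  · by_contra hl
    push_neg at hl
    have : 0 ≤ (-a) * (-a) := mul_nonneg (by linarith) (by linarith)
    linarith [q, this]
  · by_contra hl
    push_neg at hl
    have : 0 ≤ (a - 6) * a := mul_nonneg (by linarith) (by linarith)
    linarith [q, this]

lemma cBound' (a c1 c2 c3 c4 c5 c6 c7 : ℤ)
    (h1 : a*a = c1*c1+c2*c2+c3*c3+c4*c4+c5*c5+c6*c6+c7*c7)
    (h2 : 3*a + (c1+c2+c3+c4+c5+c6+c7) = 2)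
    (ha1 : 1 ≤ a) (ha5 : a ≤ 5) : -2 ≤ c1 ∧ c1 ≤ 0 := by
  have e : (c2+c3+c4+c5+c6+c7)*(c2+c3+c4+c5+c6+c7) = (2-3*a-c1)*(2-3*a-c1) := by
    have : c2+c3+c4+c5+c6+c7 = 2-3*a-c1 := by linarith
    rw [this]
  have q : 7*(c1*c1) + (6*a-4)*c1 + 3*(a*a) - 12*a + 4 ≤ 0 := by
    linarith [e, h1,
      sq_nonneg (c2-c3), sq_nonneg (c2-c4), sq_nonneg (c2-c5), sq_nonneg (c2-c6), sq_nonneg (c2-c7),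
      sq_nonneg (c3-c4), sq_nonneg (c3-c5), sq_nonneg (c3-c6), sq_nonneg (c3-c7),
      sq_nonneg (c4-c5), sq_nonneg (c4-c6), sq_nonneg (c4-c7),
      sq_nonneg (c5-c6), sq_nonneg (c5-c7), sq_nonneg (c6-c7)]
  constructor
  · by_contra hl
    push_neg at hl
    have hp : 0 ≤ (-(c1+3)) * (-(7*c1 + 6*a - 25)) :=
      mul_nonneg (by linarith) (by linarith)
    linarith [q, hp, sq_nonneg (a-5)]
  · by_contra hl
    push_neg at hl
    have hp : 0 ≤ (c1 - 1) * (6*a - 4) := mul_nonneg (by linarith) (by linarith)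
    linarith [q, hp, sq_nonneg (c1-1), sq_nonneg (a-1)]

/-- The enumeration finset of coefficient tuples. -/
noncomputable def Senum : Finset (ℤ × ℤ × ℤ × ℤ × ℤ × ℤ × ℤ × ℤ) :=
  ((Finset.Icc (1:ℤ) 5 ×ˢ Finset.Icc (-2:ℤ) 0 ×ˢ Finset.Icc (-2:ℤ) 0 ×ˢ Finset.Icc (-2:ℤ) 0 ×ˢ
    Finset.Icc (-2:ℤ) 0 ×ˢ Finset.Icc (-2:ℤ) 0 ×ˢ Finset.Icc (-2:ℤ) 0 ×ˢ Finset.Icc (-2:ℤ) 0).filter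
  (fun p => p.1*p.1 = p.2.1*p.2.1 + p.2.2.1*p.2.2.1 + p.2.2.2.1*p.2.2.2.1 + p.2.2.2.2.1*p.2.2.2.2.1
      + p.2.2.2.2.2.1*p.2.2.2.2.2.1 + p.2.2.2.2.2.2.1*p.2.2.2.2.2.2.1 + p.2.2.2.2.2.2.2*p.2.2.2.2.2.2.2
    ∧ 3*p.1 + (p.2.1 + p.2.2.1 + p.2.2.2.1 + p.2.2.2.2.1 + p.2.2.2.2.2.1 + p.2.2.2.2.2.2.1 + p.2.2.2.2.2.2.2) = 2))

def gmap (p : ℤ × ℤ × ℤ × ℤ × ℤ × ℤ × ℤ × ℤ) : V :=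
  ![p.1, p.2.1, p.2.2.1, p.2.2.2.1, p.2.2.2.2.1, p.2.2.2.2.2.1, p.2.2.2.2.2.2.1, p.2.2.2.2.2.2.2]

lemma gmap_inj : Function.Injective gmap := by
  intro p q h
  have h0 : p.1 = q.1 := congrFun h 0
  have h1 : p.2.1 = q.2.1 := congrFun h 1
  have h2 : p.2.2.1 = q.2.2.1 := congrFun h 2
  have h3 : p.2.2.2.1 = q.2.2.2.1 := congrFun h 3
  have h4 : p.2.2.2.2.1 = q.2.2.2.2.1 := congrFun h 4
  have h5 : p.2.2.2.2.2.1 = q.2.2.2.2.2.1 := congrFun h 5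
  have h6 : p.2.2.2.2.2.2.1 = q.2.2.2.2.2.2.1 := congrFun h 6
  have h7 : p.2.2.2.2.2.2.2 = q.2.2.2.2.2.2.2 := congrFun h 7
  exact Prod.ext h0 (Prod.ext h1 (Prod.ext h2 (Prod.ext h3 (Prod.ext h4 (Prod.ext h5 (Prod.ext h6 h7))))))

lemma gmap_eval (v : V) : gmap (v 0, v 1, v 2, v 3, v 4, v 5, v 6, v 7) = v := by
  funext i
  fin_cases i <;> rfl

set_option maxRecDepth 1000000 in
set_option maxHeartbeats 4000000 in
lemma Senum_card : Senum.card = 126 := by decide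

lemma F_eq : F = ↑(Senum.image gmap) := by
  ext v
  simp only [F, Set.mem_setOf_eq, Finset.coe_image, Set.mem_image, Finset.mem_coe]
  constructor
  · rintro ⟨hv0, hv2⟩
    rw [Bvv'] at hv0
    rw [Bvh'] at hv2
    have h1 : v 0 * v 0 = v 1*v 1 + v 2*v 2 + v 3*v 3 + v 4*v 4 + v 5*v 5 + v 6*v 6 + v 7*v 7 := by linarith
    have h2 : 3*(v 0) + (v 1 + v 2 + v 3 + v 4 + v 5 + v 6 + v 7) = 2 := by linarith
    obtain ⟨ha1, ha5⟩ := aBound' (v 0) (v 1) (v 2) (v 3) (v 4) (v 5) (v 6) (v 7) h1 h2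
    have b1 := cBound' (v 0) (v 1) (v 2) (v 3) (v 4) (v 5) (v 6) (v 7) h1 h2 ha1 ha5
    have b2 := cBound' (v 0) (v 2) (v 1) (v 3) (v 4) (v 5) (v 6) (v 7) (by linarith) (by linarith) ha1 ha5
    have b3 := cBound' (v 0) (v 3) (v 1) (v 2) (v 4) (v 5) (v 6) (v 7) (by linarith) (by linarith) ha1 ha5
    have b4 := cBound' (v 0) (v 4) (v 1) (v 2) (v 3) (v 5) (v 6) (v 7) (by linarith) (by linarith) ha1 ha5
    have b5 := cBound' (v 0) (v 5) (v 1) (v 2) (v 3) (v 4) (v 6) (v 7) (by linarith) (by linarith) ha1 ha5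
    have b6 := cBound' (v 0) (v 6) (v 1) (v 2) (v 3) (v 4) (v 5) (v 7) (by linarith) (by linarith) ha1 ha5
    have b7 := cBound' (v 0) (v 7) (v 1) (v 2) (v 3) (v 4) (v 5) (v 6) (by linarith) (by linarith) ha1 ha5
    refine ⟨(v 0, v 1, v 2, v 3, v 4, v 5, v 6, v 7), ?_, gmap_eval v⟩
    simp only [Senum, Finset.mem_filter, Finset.mem_product, Finset.mem_Icc]
    exact ⟨⟨⟨ha1, ha5⟩, ⟨b1.1, b1.2⟩, ⟨b2.1, b2.2⟩, ⟨b3.1, b3.2⟩, ⟨b4.1, b4.2⟩,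
      ⟨b5.1, b5.2⟩, ⟨b6.1, b6.2⟩, ⟨b7.1, b7.2⟩⟩, h1, h2⟩
  · rintro ⟨p, hp, rfl⟩
    simp only [Senum, Finset.mem_filter] at hp
    obtain ⟨-, e1, e2⟩ := hp
    constructor
    · rw [Bvv']
      show p.1 * p.1 - (p.2.1*p.2.1 + p.2.2.1*p.2.2.1 + p.2.2.2.1*p.2.2.2.1 + p.2.2.2.2.1*p.2.2.2.2.1
        + p.2.2.2.2.2.1*p.2.2.2.2.2.1 + p.2.2.2.2.2.2.1*p.2.2.2.2.2.2.1 + p.2.2.2.2.2.2.2*p.2.2.2.2.2.2.2) = 0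
      linarith [e1]
    · rw [Bvh']
      show 3 * p.1 + (p.2.1 + p.2.2.1 + p.2.2.2.1 + p.2.2.2.2.1 + p.2.2.2.2.2.1 + p.2.2.2.2.2.2.1 + p.2.2.2.2.2.2.2) = 2
      linarith [e2]

end Aux

/-- F is a finite set of cardinality exactly 126. -/
theorem stmt1 : F.Finite ∧ F.ncard = 126 := by
  rw [F_eq]
  refine ⟨(Senum.image gmap).finite_toSet, ?_⟩
  rw [Set.ncard_coe_finset, Finset.card_image_of_injective Senum gmap_inj, Senum_card]
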